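/- In the delayed distributed gradient dynamics, assume α : ℝ → (0,∞) is nonincreasing with α(t) = 1 for all t ≤ 0 and lim_{t→∞} α(t) = 0. Then for every i = 1,…,n, lim_{t→∞} |x_i(t) − x̄(t)| = 0, i.e., the agents' estimates asymptotically reach consensus at their average. -/

import Mathlib

open Filter MeasureTheory intervalIntegral



/-- Projection onto the tangent cone of the interval `[a,b]` at a point `x ∈ [a,b]`. -/
noncomputable def proj (a b x v : ℝ) : ℝ :=
  if a < x ∧ x < b then v else if x = a then max 0 v else -(max 0 (-v))

/-- Euclidean norm on `ℝⁿ`. -/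
noncomputable def eNorm {n : ℕ} (y : Fin n → ℝ) : ℝ := Real.sqrt (∑ i, (y i) ^ 2)

/-- Average of the agents' estimates. -/
noncomputable def avg {n : ℕ} (x : Fin n → ℝ → ℝ) (t : ℝ) : ℝ := (∑ i, x i t) / n

/-- Velocity field of the delayed distributed gradient dynamics:
`v_i(t) = −βx_i(t) + βΣⱼ a_{ij}x_j(t−τ) − α(t)f_i'(x_i(t))`. -/
noncomputable def vel {n : ℕ} (β τ : ℝ) (A : Fin n → Fin n → ℝ) (α : ℝ → ℝ)
    (f' : Fin n → ℝ → ℝ) (x : Fin n → ℝ → ℝ) (i : Fin n) (t : ℝ) : ℝ :=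
  -β * x i t + β * (∑ j, A i j * x j (t - τ)) - α t * f' i (x i t)

/-! ### Auxiliary facts about `eNorm` -/

lemma eNorm_nonneg' {n : ℕ} (y : Fin n → ℝ) : 0 ≤ eNorm y := Real.sqrt_nonneg _

lemma abs_le_eNorm {n : ℕ} (y : Fin n → ℝ) (i : Fin n) : |y i| ≤ eNorm y := by
  have h : (y i)^2 ≤ ∑ j, (y j)^2 :=
    Finset.single_le_sum (fun j _ => sq_nonneg (y j)) (Finset.mem_univ i)
  calc |y i| = Real.sqrt ((y i)^2) := (Real.sqrt_sq_eq_abs _).symm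
    _ ≤ eNorm y := Real.sqrt_le_sqrt h

lemma eNorm_eq_norm {n : ℕ} (y : Fin n → ℝ) :
    eNorm y = ‖(WithLp.equiv 2 (Fin n → ℝ)).symm y‖ := by
  rw [EuclideanSpace.norm_eq]
  simp [eNorm, Real.norm_eq_abs, sq_abs]

lemma eNorm_add_le {n : ℕ} (p q : Fin n → ℝ) :
    eNorm (fun i => p i + q i) ≤ eNorm p + eNorm q := by
  rw [eNorm_eq_norm, eNorm_eq_norm, eNorm_eq_norm]
  exact norm_add_le ((WithLp.equiv 2 (Fin n → ℝ)).symm p) ((WithLp.equiv 2 (Fin n → ℝ)).symm q)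

lemma eNorm_smul {n : ℕ} (c : ℝ) (p : Fin n → ℝ) :
    eNorm (fun i => c * p i) = |c| * eNorm p := by
  rw [eNorm_eq_norm, eNorm_eq_norm]
  have : (WithLp.equiv 2 (Fin n → ℝ)).symm (fun i => c * p i)
      = c • (WithLp.equiv 2 (Fin n → ℝ)).symm p := by
    ext i; simp [WithLp.equiv_symm_apply, PiLp.toLp_apply]
  rw [this, norm_smul, Real.norm_eq_abs]

lemma eNorm_le_sum {n : ℕ} (p : Fin n → ℝ) : eNorm p ≤ ∑ i, |p i| := by
  have h : ∑ i, (p i)^2 ≤ (∑ i, |p i|)^2 := by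
    calc ∑ i, (p i)^2 = ∑ i, |p i| * |p i| := by
          refine Finset.sum_congr rfl fun i _ => ?_; rw [sq, ← abs_mul_self (p i), abs_mul]
      _ ≤ ∑ i, |p i| * (∑ j, |p j|) := by
          refine Finset.sum_le_sum fun i _ => ?_
          exact mul_le_mul_of_nonneg_left
            (Finset.single_le_sum (fun j _ => abs_nonneg (p j)) (Finset.mem_univ i)) (abs_nonneg _)
      _ = (∑ i, |p i|)^2 := by rw [← Finset.sum_mul]; ring
  calc eNorm p ≤ Real.sqrt ((∑ i, |p i|)^2) := Real.sqrt_le_sqrt h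
    _ = ∑ i, |p i| := Real.sqrt_sq (Finset.sum_nonneg fun i _ => abs_nonneg _)

lemma abs_sum_mul_le_eNorm_mul {n : ℕ} (u h : Fin n → ℝ) :
    |∑ i, u i * h i| ≤ eNorm u * eNorm h := by
  have h1 := Finset.sum_mul_sq_le_sq_mul_sq Finset.univ u h
  calc |∑ i, u i * h i| = Real.sqrt ((∑ i, u i * h i)^2) := (Real.sqrt_sq_eq_abs _).symm
    _ ≤ Real.sqrt ((∑ i, (u i)^2) * ∑ i, (h i)^2) := Real.sqrt_le_sqrt h1
    _ = eNorm u * eNorm h := Real.sqrt_mul (Finset.sum_nonneg fun i _ => sq_nonneg _) _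

/-! ### Dynamics helpers -/

/-- projection error -/
noncomputable def zz {n : ℕ} (a b β τ : ℝ) (A : Fin n → Fin n → ℝ) (α : ℝ → ℝ)
    (f' : Fin n → ℝ → ℝ) (x : Fin n → ℝ → ℝ) (i : Fin n) (t : ℝ) : ℝ :=
  vel β τ A α f' x i t - proj a b (x i t) (vel β τ A α f' x i t)

/-- gradient term plus projection error -/
noncomputable def gg {n : ℕ} (a b β τ : ℝ) (A : Fin n → Fin n → ℝ) (α : ℝ → ℝ)
    (f' : Fin n → ℝ → ℝ) (x : Fin n → ℝ → ℝ) (i : Fin n) (t : ℝ) : ℝ :=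
  α t * f' i (x i t) + zz a b β τ A α f' x i t

/-- deviation from average -/
noncomputable def Yf {n : ℕ} (x : Fin n → ℝ → ℝ) (j : Fin n) (s : ℝ) : ℝ := x j s - avg x s

/-- norm of the deviation vector -/
noncomputable def Vf {n : ℕ} (x : Fin n → ℝ → ℝ) (s : ℝ) : ℝ := eNorm (fun j => Yf x j s)

/-- derivative of `e^{βt} (x_i - x̄)` -/
noncomputable def hf {n : ℕ} (a b β τ : ℝ) (A : Fin n → Fin n → ℝ) (α : ℝ → ℝ)
    (f' : Fin n → ℝ → ℝ) (x : Fin n → ℝ → ℝ) (j : Fin n) (t : ℝ) : ℝ :=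
  Real.exp (β*t) * (β * (∑ k, A j k * (x k (t-τ) - avg x (t-τ)))
    - (gg a b β τ A α f' x j t - (∑ k, gg a b β τ A α f' x k t)/n))

/-- dominating function -/
noncomputable def HHf {n : ℕ} (β τ σ₂ C : ℝ) (α : ℝ → ℝ) (x : Fin n → ℝ → ℝ) (s : ℝ) : ℝ :=
  Real.exp (β*s) * (β*σ₂* Vf x (s-τ)) + Real.exp (β*s) * (4*C*α s)

lemma zeta_bound {n : ℕ} (a b β τ : ℝ) (A : Fin n → Fin n → ℝ) (α : ℝ → ℝ)
    (f' : Fin n → ℝ → ℝ) (x : Fin n → ℝ → ℝ) (i : Fin n) (t : ℝ)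
    (hτ : 0 < τ) (hβ : 0 < β) (ht : 0 ≤ t)
    (hA0 : ∀ j, 0 ≤ A i j) (hArow : ∑ j, A i j = 1)
    (hxmem : ∀ j, ∀ s ≥ -τ, x j s ∈ Set.Icc a b)
    (Ci : ℝ) (hCb : ∀ z ∈ Set.Icc a b, |f' i z| ≤ Ci)
    (hα : 0 ≤ α t) :
    |zz a b β τ A α f' x i t| ≤ α t * Ci := by
  have hmem : x i t ∈ Set.Icc a b := hxmem i t (le_trans (neg_nonpos.mpr hτ.le) ht)
  have hXa : a ≤ x i t := hmem.1
  have hXb : x i t ≤ b := hmem.2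
  have hf : |f' i (x i t)| ≤ Ci := hCb _ hmem
  have hCi0 : 0 ≤ Ci := le_trans (abs_nonneg _) hf
  have hrhs : 0 ≤ α t * Ci := mul_nonneg hα hCi0
  have hbd : α t * |f' i (x i t)| ≤ α t * Ci := mul_le_mul_of_nonneg_left hf hα
  set v := vel β τ A α f' x i t with hv
  have hsum_lb : a ≤ ∑ j, A i j * x j (t - τ) := by
    calc a = ∑ j, A i j * a := by rw [← Finset.sum_mul, hArow, one_mul]
      _ ≤ ∑ j, A i j * x j (t - τ) := by
          refine Finset.sum_le_sum fun j _ => ?_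
          exact mul_le_mul_of_nonneg_left ((hxmem j (t - τ) (by linarith)).1) (hA0 j)
  have hsum_ub : ∑ j, A i j * x j (t - τ) ≤ b := by
    calc ∑ j, A i j * x j (t - τ) ≤ ∑ j, A i j * b := by
          refine Finset.sum_le_sum fun j _ => ?_
          exact mul_le_mul_of_nonneg_left ((hxmem j (t - τ) (by linarith)).2) (hA0 j)
      _ = b := by rw [← Finset.sum_mul, hArow, one_mul]
  unfold zz proj
  rw [← hv]
  by_cases h1 : a < x i t ∧ x i t < b
  · simp [h1, hrhs]
  · rw [if_neg h1]
    by_cases h2 : x i t = a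
    · rw [if_pos h2]
      rcases le_or_gt 0 v with hv0 | hv0
      · rw [max_eq_right hv0]; simpa using hrhs
      · rw [max_eq_left hv0.le]
        have hvge : -(α t * f' i (x i t)) ≤ v := by
          have : 0 ≤ β * (∑ j, A i j * x j (t - τ)) - β * x i t := by
            rw [h2]; nlinarith
          rw [hv]; unfold vel; linarith
        rw [sub_zero, abs_of_neg hv0]
        have : α t * f' i (x i t) ≤ α t * |f' i (x i t)| :=
          mul_le_mul_of_nonneg_left (le_abs_self _) hα
        linarith
    · rw [if_neg h2]
      have hXeqb : x i t = b := by
        rcases lt_or_eq_of_le hXa with h | h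
        · rcases lt_or_eq_of_le hXb with h' | h'
          · exact absurd ⟨h, h'⟩ h1
          · exact h'
        · exact absurd h.symm h2
      rcases le_or_gt v 0 with hv0 | hv0
      · rw [max_eq_right (by linarith : 0 ≤ -v)]
        have : v - -(-v) = 0 := by ring
        rw [this, abs_zero]; exact hrhs
      · rw [max_eq_left (by linarith : -v ≤ 0)]
        have hvle : v ≤ -(α t * f' i (x i t)) := by
          have : β * (∑ j, A i j * x j (t - τ)) - β * x i t ≤ 0 := by
            rw [hXeqb]; nlinarith
          rw [hv]; unfold vel; linarith
        have h0 : v - -0 = v := by ring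
        rw [h0, abs_of_pos hv0]
        have : -(α t * f' i (x i t)) ≤ α t * |f' i (x i t)| := by
          have := neg_abs_le (f' i (x i t))
          nlinarith
        linarith

lemma proj_eq' {n : ℕ} (a b β τ : ℝ) (A : Fin n → Fin n → ℝ) (α : ℝ → ℝ)
    (f' : Fin n → ℝ → ℝ) (x : Fin n → ℝ → ℝ) (i : Fin n) (t : ℝ) :
    proj a b (x i t) (vel β τ A α f' x i t)
      = -β * x i t + β * (∑ j, A i j * x j (t - τ)) - gg a b β τ A α f' x i t := by
  unfold gg zz vel; ring

lemma deriv_identity {n : ℕ} (hn : 1 ≤ n) (β : ℝ) (A : Fin n → Fin n → ℝ)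
    (hArow : ∀ i, ∑ j, A i j = 1) (hAcol : ∀ j, ∑ i, A i j = 1)
    (X Z G : Fin n → ℝ) (i : Fin n) :
    β * (∑ j, A i j * (Z j - (∑ k, Z k)/n)) - (G i - (∑ j, G j)/n)
      = β * (X i - (∑ k, X k)/n)
        + ((-β * X i + β * (∑ j, A i j * Z j) - G i)
            - (∑ j, (-β * X j + β * (∑ k, A j k * Z k) - G j))/n) := by
  have hn0 : (n:ℝ) ≠ 0 := Nat.cast_ne_zero.mpr (by omega)
  have S1 : ∑ j, A i j * (Z j - (∑ k, Z k)/n)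
      = (∑ j, A i j * Z j) - (∑ k, Z k)/n := by
    simp only [mul_sub, Finset.sum_sub_distrib, ← Finset.sum_mul, hArow i, one_mul]
  have S2 : ∑ j, (∑ k, A j k * Z k) = ∑ k, Z k := by
    rw [Finset.sum_comm]
    refine Finset.sum_congr rfl fun k _ => ?_
    rw [← Finset.sum_mul, hAcol k, one_mul]
  have S3 : ∑ j, (-β * X j + β * (∑ k, A j k * Z k) - G j)
      = -β * (∑ j, X j) + β * (∑ k, Z k) - ∑ j, G j := by
    rw [Finset.sum_sub_distrib, Finset.sum_add_distrib, ← Finset.mul_sum, ← Finset.mul_sum, S2]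
  rw [S1, S3]
  field_simp
  ring

lemma u_hasDeriv {n : ℕ} (hn : 1 ≤ n) (a b β τ : ℝ) (A : Fin n → Fin n → ℝ) (α : ℝ → ℝ)
    (f' : Fin n → ℝ → ℝ) (x : Fin n → ℝ → ℝ)
    (hArow : ∀ i, ∑ j, A i j = 1) (hAcol : ∀ j, ∑ i, A i j = 1) (i : Fin n) (t : ℝ)
    (hxode : ∀ j, HasDerivAt (x j) (proj a b (x j t) (vel β τ A α f' x j t)) t) :
    HasDerivAt (fun s => Real.exp (β*s) * (x i s - avg x s)) (hf a b β τ A α f' x i t) t := by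
  have hx' : ∀ j, HasDerivAt (x j)
      (-β * x j t + β * (∑ k, A j k * x k (t - τ)) - gg a b β τ A α f' x j t) t := by
    intro j
    have h := hxode j
    rwa [proj_eq'] at h
  have hsum : HasDerivAt (fun s => ∑ j, x j s)
      (∑ j, (-β * x j t + β * (∑ k, A j k * x k (t - τ)) - gg a b β τ A α f' x j t)) t :=
    HasDerivAt.fun_sum fun j _ => hx' j
  have havg : HasDerivAt (avg x)
      ((∑ j, (-β * x j t + β * (∑ k, A j k * x k (t - τ)) - gg a b β τ A α f' x j t))/(n:ℝ)) t := by
    have heq : avg x = fun s => (∑ j, x j s)/(n:ℝ) := rfl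
    rw [heq]; exact hsum.div_const n
  have hy := (hx' i).sub havg
  have hexp : HasDerivAt (fun s => Real.exp (β*s)) (Real.exp (β*t)*(β*1)) t :=
    ((hasDerivAt_id t).const_mul β).exp
  have hu := hexp.mul hy
  unfold hf
  refine hu.congr_deriv (Eq.symm ?_)
  rw [Pi.sub_apply]
  have key := deriv_identity hn β A hArow hAcol (fun j => x j t) (fun j => x j (t-τ))
    (fun j => gg a b β τ A α f' x j t) i
  unfold avg
  linear_combination (Real.exp (β*t)) * key


set_option maxHeartbeats 2000000 in
/-- Lemma 4.1, part (2): asymptotic consensus of the agents' estimates. -/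
theorem stmt_11
    (n : ℕ) (hn : 1 ≤ n) (a b : ℝ) (hab : a ≤ b)
    (A : Fin n → Fin n → ℝ) (hA0 : ∀ i j, 0 ≤ A i j)
    (hArow : ∀ i, ∑ j, A i j = 1) (hAcol : ∀ j, ∑ i, A i j = 1)
    (σ₂ : ℝ) (hσ : σ₂ ∈ Set.Ioo (0:ℝ) 1)
    (hAcontr : ∀ y : Fin n → ℝ, (∑ i, y i) = 0 →
      eNorm (fun i => ∑ j, A i j * y j) ≤ σ₂ * eNorm y)
    (f f' : Fin n → ℝ → ℝ)
    (hconv : ∀ i, ConvexOn ℝ Set.univ (f i))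
    (hderiv : ∀ i z, HasDerivAt (f i) (f' i z) z)
    (Cb : Fin n → ℝ) (hCb : ∀ i, ∀ z ∈ Set.Icc a b, |f' i z| ≤ Cb i)
    (C : ℝ) (hC : C = ∑ i, Cb i)
    (τ : ℝ) (hτ : 0 < τ)
    (β : ℝ) (hβ : 0 < β) (hβ2 : β < Real.log (1 / σ₂) / τ)
    (γ : ℝ) (hγ : γ = σ₂ * Real.exp (β * τ))
    (α : ℝ → ℝ) (hαpos : ∀ t, 0 < α t)
    (x : Fin n → ℝ → ℝ)
    (hxcont : ∀ i, ContinuousOn (x i) (Set.Ici (-τ)))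
    (hxmem : ∀ i, ∀ t ≥ -τ, x i t ∈ Set.Icc a b)
    (hxode : ∀ i, ∀ t ≥ (0:ℝ),
      HasDerivAt (x i) (proj a b (x i t) (vel β τ A α f' x i t)) t)
    (hαanti : Antitone α) (hα1 : ∀ t ≤ (0:ℝ), α t = 1)
    (hαlim : Filter.Tendsto α Filter.atTop (nhds 0)) :
    ∀ i : Fin n,
      Filter.Tendsto (fun t => |x i t - avg x t|) Filter.atTop (nhds 0) := by
  classical
  obtain ⟨hσ0, hσ1⟩ := hσ
  have hn0 : (n:ℝ) ≠ 0 := Nat.cast_ne_zero.mpr (by omega)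
  have hnpos : (0:ℝ) < n := by exact_mod_cast Nat.pos_of_ne_zero (by omega)
  have hCb0 : ∀ j, 0 ≤ Cb j := fun j => le_trans (abs_nonneg _) (hCb j a ⟨le_refl a, hab⟩)
  have hC0 : 0 ≤ C := hC ▸ Finset.sum_nonneg fun j _ => hCb0 j
  have hα0 : ∀ s, 0 ≤ α s := fun s => (hαpos s).le
  have hαle1 : ∀ s, α s ≤ 1 := by
    intro s; rcases le_or_gt s 0 with hs | hs
    · exact (hα1 s hs).le
    · calc α s ≤ α 0 := hαanti hs.le
        _ = 1 := hα1 0 le_rfl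
  -- bound on gg
  have hGb : ∀ j, ∀ t, (0:ℝ) ≤ t → |gg a b β τ A α f' x j t| ≤ 2 * (α t * Cb j) := by
    intro j t ht
    have h1 := zeta_bound a b β τ A α f' x j t hτ hβ ht (fun k => hA0 j k) (hArow j)
      hxmem (Cb j) (hCb j) (hα0 t)
    have hmem : x j t ∈ Set.Icc a b := hxmem j t (by linarith)
    have h2 : |α t * f' j (x j t)| ≤ α t * Cb j := by
      rw [abs_mul, abs_of_nonneg (hα0 t)]
      exact mul_le_mul_of_nonneg_left (hCb j _ hmem) (hα0 t)
    calc |gg a b β τ A α f' x j t|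
        ≤ |α t * f' j (x j t)| + |zz a b β τ A α f' x j t| := abs_add_le _ _
      _ ≤ 2 * (α t * Cb j) := by linarith
  -- sum of deviations vanishes
  have hYsum : ∀ s, ∑ j, Yf x j s = 0 := by
    intro s; unfold Yf avg
    rw [Finset.sum_sub_distrib, Finset.sum_const, Finset.card_univ, Fintype.card_fin,
      nsmul_eq_mul]
    field_simp
    ring
  have hV0 : ∀ s, 0 ≤ Vf x s := fun s => eNorm_nonneg' _
  -- bound on V
  have havgmem : ∀ s, -τ ≤ s → avg x s ∈ Set.Icc a b := by
    intro s hs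
    constructor
    · unfold avg; rw [le_div_iff₀ hnpos]
      have h1 : ∑ j : Fin n, a ≤ ∑ j, x j s := Finset.sum_le_sum fun j _ => (hxmem j s hs).1
      rw [Finset.sum_const, Finset.card_univ, Fintype.card_fin, nsmul_eq_mul] at h1
      linarith
    · unfold avg; rw [div_le_iff₀ hnpos]
      have h1 : ∑ j, x j s ≤ ∑ j : Fin n, b := Finset.sum_le_sum fun j _ => (hxmem j s hs).2
      rw [Finset.sum_const, Finset.card_univ, Fintype.card_fin, nsmul_eq_mul] at h1
      linarith
  have hVbd : ∀ s, -τ ≤ s → Vf x s ≤ Real.sqrt n * (b - a) := by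
    intro s hs
    have hY : ∀ j, (Yf x j s)^2 ≤ (b-a)^2 := by
      intro j
      have h1 := hxmem j s hs
      have h2 := havgmem s hs
      have habs : |Yf x j s| ≤ b - a := by
        have : |x j s - avg x s| ≤ b - a :=
          abs_le.mpr ⟨by linarith [h1.1, h2.2], by linarith [h1.2, h2.1]⟩
        exact this
      calc (Yf x j s)^2 = |Yf x j s|^2 := (sq_abs _).symm
        _ ≤ (b-a)^2 := by
            have hba : (0:ℝ) ≤ b - a := by linarith
            nlinarith [abs_nonneg (Yf x j s)]
    unfold Vf eNorm
    calc Real.sqrt (∑ j, (Yf x j s)^2)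
        ≤ Real.sqrt (∑ _j : Fin n, (b-a)^2) :=
          Real.sqrt_le_sqrt (Finset.sum_le_sum fun j _ => hY j)
      _ = Real.sqrt ((n:ℝ) * (b-a)^2) := by
          rw [Finset.sum_const, Finset.card_univ, Fintype.card_fin, nsmul_eq_mul]
      _ = Real.sqrt n * (b-a) := by
          rw [Real.sqrt_mul (by positivity), Real.sqrt_sq (by linarith)]
  -- continuity of V
  have hVcont : ContinuousOn (Vf x) (Set.Ici (-τ)) := by
    have hYc : ∀ j : Fin n, ContinuousOn (fun s => Yf x j s) (Set.Ici (-τ)) := by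
      intro j
      have havgc : ContinuousOn (avg x) (Set.Ici (-τ)) := by
        have heq : avg x = fun s => (∑ j, x j s)/(n:ℝ) := rfl
        rw [heq]
        exact ContinuousOn.div_const (continuousOn_finset_sum _ fun j _ => hxcont j) n
      exact (hxcont j).sub havgc
    have : ContinuousOn (fun s => ∑ j, (Yf x j s)^2) (Set.Ici (-τ)) :=
      continuousOn_finset_sum _ fun j _ => (hYc j).pow 2
    exact Real.continuous_sqrt.comp_continuousOn this
  -- bound on hf
  have hhb : ∀ t, (0:ℝ) ≤ t → eNorm (fun j => hf a b β τ A α f' x j t)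
      ≤ HHf β τ σ₂ C α x t := by
    intro t ht
    set P : Fin n → ℝ := fun j => β * (∑ k, A j k * Yf x k (t-τ)) with hP
    set Q : Fin n → ℝ := fun j => gg a b β τ A α f' x j t
      - (∑ k, gg a b β τ A α f' x k t)/n with hQ
    have ePbound : eNorm P ≤ β * (σ₂ * Vf x (t-τ)) := by
      have e1 : eNorm P = |β| * eNorm (fun j => ∑ k, A j k * Yf x k (t-τ)) :=
        eNorm_smul β _
      have e2 : eNorm (fun j => ∑ k, A j k * Yf x k (t-τ)) ≤ σ₂ * Vf x (t-τ) :=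
        hAcontr (fun k => Yf x k (t-τ)) (hYsum (t-τ))
      rw [e1, abs_of_pos hβ]
      exact mul_le_mul_of_nonneg_left e2 hβ.le
    have eQbound : eNorm Q ≤ 4*C*α t := by
      have hGs : ∑ j, |gg a b β τ A α f' x j t| ≤ 2 * α t * C := by
        calc ∑ j, |gg a b β τ A α f' x j t| ≤ ∑ j, 2 * (α t * Cb j) :=
              Finset.sum_le_sum fun j _ => hGb j t ht
          _ = 2 * α t * C := by
              rw [hC, Finset.mul_sum]
              exact Finset.sum_congr rfl fun j _ => by ring
      have hSs : |∑ j, gg a b β τ A α f' x j t| ≤ ∑ j, |gg a b β τ A α f' x j t| :=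
        Finset.abs_sum_le_sum_abs _ _
      calc eNorm Q ≤ ∑ j, |Q j| := eNorm_le_sum Q
        _ ≤ ∑ j : Fin n, (|gg a b β τ A α f' x j t|
              + |∑ k, gg a b β τ A α f' x k t|/n) := by
            refine Finset.sum_le_sum fun j _ => ?_
            rw [hQ]
            calc |gg a b β τ A α f' x j t - (∑ k, gg a b β τ A α f' x k t)/n|
                ≤ |gg a b β τ A α f' x j t| + |(∑ k, gg a b β τ A α f' x k t)/n| := by
                  rw [sub_eq_add_neg]
                  exact (abs_add_le _ _).trans (by rw [abs_neg])
              _ = |gg a b β τ A α f' x j t| + |∑ k, gg a b β τ A α f' x k t|/n := by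
                  rw [abs_div, abs_of_pos hnpos]
        _ = (∑ j, |gg a b β τ A α f' x j t|) + |∑ k, gg a b β τ A α f' x k t| := by
            rw [Finset.sum_add_distrib, Finset.sum_const, Finset.card_univ, Fintype.card_fin,
              nsmul_eq_mul]
            field_simp
        _ ≤ 4*C*α t := by linarith
    have habs : |Real.exp (β*t)| = Real.exp (β*t) := abs_of_pos (Real.exp_pos _)
    calc eNorm (fun j => hf a b β τ A α f' x j t)
        = eNorm (fun j => Real.exp (β*t) * (P j + (-1) * Q j)) := by
          congr 1; funext j; unfold hf; rw [hP, hQ]; unfold Yf; ring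
      _ = |Real.exp (β*t)| * eNorm (fun j => P j + (-1) * Q j) := eNorm_smul _ _
      _ ≤ Real.exp (β*t) * (eNorm P + eNorm (fun j => (-1) * Q j)) := by
          rw [habs]
          exact mul_le_mul_of_nonneg_left (eNorm_add_le P _) (Real.exp_pos _).le
      _ = Real.exp (β*t) * (eNorm P + eNorm Q) := by
          rw [eNorm_smul (-1) Q]; norm_num
      _ ≤ Real.exp (β*t) * (β * (σ₂ * Vf x (t-τ)) + 4*C*α t) := by
          refine mul_le_mul_of_nonneg_left ?_ (Real.exp_pos _).le
          linarith
      _ = HHf β τ σ₂ C α x t := by unfold HHf; ring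
  -- pointwise upper bound for HHf on [0,t]
  have hHK : ∀ t s : ℝ, 0 ≤ s → s ≤ t → HHf β τ σ₂ C α x s
      ≤ Real.exp (β*t) * (β*σ₂*(Real.sqrt n * (b-a))) + Real.exp (β*t) * (4*C) := by
    intro t s hs hst
    have he : Real.exp (β*s) ≤ Real.exp (β*t) :=
      Real.exp_le_exp.mpr (by nlinarith)
    have h1 : Vf x (s-τ) ≤ Real.sqrt n * (b-a) := hVbd (s-τ) (by linarith)
    have h2 : α s ≤ 1 := hαle1 s
    have hVpos := hV0 (s-τ)
    have hα' := hα0 s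
    unfold HHf
    have hb1 : Real.exp (β*s) * (β*σ₂* Vf x (s-τ))
        ≤ Real.exp (β*t) * (β*σ₂*(Real.sqrt n * (b-a))) :=
      mul_le_mul he (mul_le_mul_of_nonneg_left h1 (by positivity))
        (mul_nonneg (by positivity) hVpos) (Real.exp_pos _).le
    have hb2 : Real.exp (β*s) * (4*C*α s) ≤ Real.exp (β*t) * (4*C) :=
      mul_le_mul he (by nlinarith) (mul_nonneg (by positivity) hα') (Real.exp_pos _).le
    linarith
  have hHnn : ∀ s, 0 ≤ HHf β τ σ₂ C α x s := by
    intro s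
    unfold HHf
    have := Real.exp_pos (β*s)
    have := hV0 (s-τ)
    have := hα0 s
    positivity
  -- integrability of HHf
  have hHint : ∀ c d : ℝ, 0 ≤ c → c ≤ d →
      IntervalIntegrable (HHf β τ σ₂ C α x) volume c d := by
    intro c d hc hcd
    have h1 : IntervalIntegrable (fun s => Real.exp (β*s) * (β*σ₂* Vf x (s-τ))) volume c d := by
      apply ContinuousOn.intervalIntegrable
      rw [Set.uIcc_of_le hcd]
      have hmaps : Set.MapsTo (fun s : ℝ => s - τ) (Set.Icc c d) (Set.Ici (-τ)) := by
        intro s hs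
        simp only [Set.mem_Ici]
        have := hs.1
        linarith
      have hVc : ContinuousOn (fun s => Vf x (s - τ)) (Set.Icc c d) :=
        hVcont.comp ((continuous_id.sub continuous_const).continuousOn) hmaps
      exact ((Real.continuous_exp.comp (continuous_const.mul continuous_id)).continuousOn).mul
        (continuousOn_const.mul hVc)
    have h2 : IntervalIntegrable (fun s => Real.exp (β*s) * (4*C*α s)) volume c d := by
      rw [intervalIntegrable_iff, Set.uIoc_of_le hcd]
      have hm : Measurable (fun s => Real.exp (β*s) * (4*C*α s)) :=
        ((Real.measurable_exp.comp (measurable_const.mul measurable_id)).mul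
          (hαanti.measurable.const_mul (4*C)))
      refine Integrable.mono' (g := fun _ => Real.exp (β*d) * (4*C))
        (integrableOn_const measure_Ioc_lt_top.ne) hm.aestronglyMeasurable.restrict ?_
      filter_upwards [ae_restrict_mem measurableSet_Ioc] with s hs
      have he : Real.exp (β*s) ≤ Real.exp (β*d) := Real.exp_le_exp.mpr
        (by nlinarith [hs.1.le.trans hs.2, hs.2])
      have hα' := hα0 s
      have h2' := hαle1 s
      rw [Real.norm_eq_abs, abs_of_nonneg (mul_nonneg (Real.exp_pos _).le
        (mul_nonneg (by positivity) hα'))]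
      exact mul_le_mul he (by nlinarith) (mul_nonneg (by positivity) hα') (Real.exp_pos _).le
    exact h1.add h2
  -- the key integral inequality
  have key : ∀ t, 0 ≤ t → Real.exp (β*t) * Vf x t
      ≤ Vf x 0 + ∫ s in (0:ℝ)..t, HHf β τ σ₂ C α x s := by
    intro t ht
    have hut : eNorm (fun j => Real.exp (β*t) * Yf x j t) = Real.exp (β*t) * Vf x t := by
      rw [eNorm_smul, abs_of_pos (Real.exp_pos _)]
      rfl
    rw [← hut]
    refine le_of_forall_pos_le_add ?_
    intro ε hε
    set ψ : ℝ → ℝ := fun s => Real.sqrt (ε^2 + ∑ j, (Real.exp (β*s) * Yf x j s)^2) with hψdef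
    have hψpos : ∀ s, 0 < ε^2 + ∑ j, (Real.exp (β*s) * Yf x j s)^2 := fun s =>
      add_pos_of_pos_of_nonneg (by positivity) (Finset.sum_nonneg fun j _ => sq_nonneg _)
    have hψ0 : ∀ s, 0 < ψ s := fun s => Real.sqrt_pos.mpr (hψpos s)
    set D : ℝ → ℝ := fun s => (∑ j, 2 * (Real.exp (β*s) * Yf x j s)
      * hf a b β τ A α f' x j s) / (2 * Real.sqrt (ε^2 + ∑ j, (Real.exp (β*s) * Yf x j s)^2))
      with hDdef
    have hDD : ∀ s, 0 ≤ s → HasDerivAt ψ (D s) s := by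
      intro s hs
      have hu' : ∀ j : Fin n, HasDerivAt (fun r => Real.exp (β*r) * Yf x j r)
          (hf a b β τ A α f' x j s) s := by
        intro j
        exact u_hasDeriv hn a b β τ A α f' x hArow hAcol j s (fun k => hxode k s hs)
      have h' : ∀ j : Fin n, j ∈ Finset.univ →
          HasDerivAt (fun r => (Real.exp (β*r) * Yf x j r)^2)
            (((2:ℕ):ℝ) * (Real.exp (β*s) * Yf x j s)^(2-1) * hf a b β τ A α f' x j s) s :=
        fun j _ => (hu' j).pow 2
      have h'' := (hasDerivAt_const s (ε^2)).add (HasDerivAt.fun_sum h')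
      have hin : HasDerivAt (fun r => ε^2 + ∑ j, (Real.exp (β*r) * Yf x j r)^2)
          (∑ j, 2 * (Real.exp (β*s) * Yf x j s) * hf a b β τ A α f' x j s) s := by
        refine h''.congr_deriv (Eq.symm ?_)
        rw [zero_add]
        exact Finset.sum_congr rfl fun j _ => by push_cast; ring
      exact hin.sqrt (ne_of_gt (hψpos s))
    -- |D s| ≤ HHf s for s ≥ 0
    have hDle : ∀ s, 0 ≤ s → |D s| ≤ HHf β τ σ₂ C α x s := by
      intro s hs
      have hnum : (∑ j, 2 * (Real.exp (β*s) * Yf x j s) * hf a b β τ A α f' x j s)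
          = 2 * ∑ j, (Real.exp (β*s) * Yf x j s) * hf a b β τ A α f' x j s := by
        rw [Finset.mul_sum]
        exact Finset.sum_congr rfl fun j _ => by ring
      have hcs : |∑ j, (Real.exp (β*s) * Yf x j s) * hf a b β τ A α f' x j s|
          ≤ eNorm (fun j => Real.exp (β*s) * Yf x j s) * eNorm (fun j => hf a b β τ A α f' x j s) :=
        abs_sum_mul_le_eNorm_mul _ _
      have hule : eNorm (fun j => Real.exp (β*s) * Yf x j s)
          ≤ Real.sqrt (ε^2 + ∑ j, (Real.exp (β*s) * Yf x j s)^2) := by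
        unfold eNorm
        exact Real.sqrt_le_sqrt (by nlinarith [sq_nonneg ε])
      have hhs := hhb s hs
      have hHs := hHnn s
      have hψs := hψ0 s
      have hen : (0:ℝ) ≤ eNorm (fun j => hf a b β τ A α f' x j s) := eNorm_nonneg' _
      have hen2 : (0:ℝ) ≤ eNorm (fun j => Real.exp (β*s) * Yf x j s) := eNorm_nonneg' _
      rw [hDdef]
      simp only []
      rw [abs_div, abs_of_pos (by positivity : (0:ℝ) < 2 * Real.sqrt (ε^2 + ∑ j, (Real.exp (β*s) * Yf x j s)^2))]
      rw [div_le_iff₀ (by positivity)]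
      rw [hnum, abs_mul, abs_of_nonneg (by norm_num : (0:ℝ) ≤ 2)]
      have hψeq : ψ s = Real.sqrt (ε^2 + ∑ j, (Real.exp (β*s) * Yf x j s)^2) := rfl
      rw [← hψeq] at hule ⊢
      nlinarith [mul_le_mul hule hhs hen hψs.le]
    have hDle' : ∀ s, 0 ≤ s → D s ≤ HHf β τ σ₂ C α x s := fun s hs =>
      (le_abs_self _).trans (hDle s hs)
    -- integrability of D
    have hDint : IntervalIntegrable D volume 0 t := by
      rw [intervalIntegrable_iff, Set.uIoc_of_le ht]
      have hmeas : AEStronglyMeasurable D (volume.restrict (Set.Ioc 0 t)) := by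
        refine ((measurable_deriv ψ).aestronglyMeasurable.restrict).congr ?_
        rw [Filter.EventuallyEq, ae_restrict_iff' measurableSet_Ioc]
        filter_upwards with s hs
        exact (hDD s hs.1.le).deriv
      refine Integrable.mono'
        (g := fun _ => Real.exp (β*t) * (β*σ₂*(Real.sqrt n * (b-a))) + Real.exp (β*t) * (4*C))
        (integrableOn_const measure_Ioc_lt_top.ne) hmeas ?_
      filter_upwards [ae_restrict_mem measurableSet_Ioc] with s hs
      rw [Real.norm_eq_abs]
      exact (hDle s hs.1.le).trans (hHK t s hs.1.le hs.2)
    have hHI : IntervalIntegrable (HHf β τ σ₂ C α x) volume 0 t := hHint 0 t le_rfl ht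
    have hfund : ∫ s in (0:ℝ)..t, D s = ψ t - ψ 0 := by
      refine integral_eq_sub_of_hasDerivAt (fun s hs => ?_) hDint
      rw [Set.uIcc_of_le ht] at hs
      exact hDD s hs.1
    have hcomp : ∫ s in (0:ℝ)..t, D s ≤ ∫ s in (0:ℝ)..t, HHf β τ σ₂ C α x s :=
      integral_mono_on ht hDint hHI (fun s hs => hDle' s hs.1)
    have h1 : eNorm (fun j => Real.exp (β*t) * Yf x j t) ≤ ψ t := by
      unfold eNorm
      exact Real.sqrt_le_sqrt (by nlinarith [sq_nonneg ε])
    have h2 : ψ 0 ≤ Vf x 0 + ε := by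
      have he0 : ψ 0 = Real.sqrt (ε^2 + ∑ j, (Yf x j 0)^2) := by
        rw [hψdef]
        simp
      have hS : (0:ℝ) ≤ ∑ j, (Yf x j 0)^2 := Finset.sum_nonneg fun j _ => sq_nonneg _
      have hVf0 : Vf x 0 = Real.sqrt (∑ j, (Yf x j 0)^2) := rfl
      rw [he0, hVf0]
      have hsq : ε^2 + ∑ j, (Yf x j 0)^2
          ≤ (Real.sqrt (∑ j, (Yf x j 0)^2) + ε)^2 := by
        have := Real.sq_sqrt hS
        nlinarith [Real.sqrt_nonneg (∑ j, (Yf x j 0)^2)]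
      calc Real.sqrt (ε^2 + ∑ j, (Yf x j 0)^2)
          ≤ Real.sqrt ((Real.sqrt (∑ j, (Yf x j 0)^2) + ε)^2) := Real.sqrt_le_sqrt hsq
        _ = Real.sqrt (∑ j, (Yf x j 0)^2) + ε := Real.sqrt_sq
            (by positivity)
    linarith
  -- limsup argument
  set M : ℝ := Real.sqrt n * (b - a) with hM
  have hbddle : Filter.IsBoundedUnder (· ≤ ·) Filter.atTop (Vf x) :=
    Filter.isBoundedUnder_of_eventually_le (a := M)
      (by filter_upwards [Filter.eventually_ge_atTop (-τ)] with s hs; exact hVbd s hs)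
  have hbddge : Filter.IsBoundedUnder (· ≥ ·) Filter.atTop (Vf x) :=
    Filter.isBoundedUnder_of_eventually_ge (a := 0)
      (Filter.Eventually.of_forall hV0)
  set L : ℝ := Filter.limsup (Vf x) Filter.atTop with hLdef
  have hL0 : 0 ≤ L :=
    Filter.le_limsup_of_frequently_le (Filter.Frequently.of_forall hV0) hbddle
  -- exp(β·) integral
  have hexpint : ∀ c d : ℝ, ∫ s in c..d, Real.exp (β*s)
      = (Real.exp (β*d) - Real.exp (β*c))/β := by
    intro c d
    have hder : ∀ s ∈ Set.uIcc c d, HasDerivAt (fun r => Real.exp (β*r)/β)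
        (Real.exp (β*s)) s := by
      intro s _
      have h1 : HasDerivAt (fun r => Real.exp (β*r)) (Real.exp (β*s)*(β*1)) s :=
        ((hasDerivAt_id s).const_mul β).exp
      have h2 := h1.div_const β
      refine h2.congr_deriv (Eq.symm ?_)
      rw [mul_one, mul_div_assoc, div_self hβ.ne', mul_one]
    rw [integral_eq_sub_of_hasDerivAt hder
      (((Real.continuous_exp.comp (continuous_const.mul continuous_id)).continuousOn).intervalIntegrable)]
    ring
  -- main limsup estimate
  have hmain : ∀ ε : ℝ, 0 < ε → L ≤ σ₂*(L+ε) + 4*C*ε/β + ε := by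
    intro ε hε
    obtain ⟨T₁, hT₁⟩ := Filter.eventually_atTop.mp
      (Filter.eventually_lt_of_limsup_lt (by linarith : L < L + ε) hbddle)
    obtain ⟨T₂, hT₂⟩ := Filter.eventually_atTop.mp (hαlim.eventually (gt_mem_nhds hε))
    set T : ℝ := max (max T₁ T₂) 0 + τ with hT
    have hmax0 : (0:ℝ) ≤ max (max T₁ T₂) 0 := le_max_right _ _
    have hT0 : 0 ≤ T := by rw [hT]; linarith
    have hTT₁ : T₁ ≤ T - τ := by
      have : T₁ ≤ max (max T₁ T₂) 0 := le_trans (le_max_left _ _) (le_max_left _ _)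
      rw [hT]; linarith
    have hTT₂ : T₂ ≤ T := by
      have : T₂ ≤ max (max T₁ T₂) 0 := le_trans (le_max_right _ _) (le_max_left _ _)
      rw [hT]; linarith
    -- the transient term tends to 0
    have htrans : Filter.Tendsto
        (fun t => Real.exp (-(β*t)) * (Vf x 0 + ∫ s in (0:ℝ)..T, HHf β τ σ₂ C α x s))
        Filter.atTop (nhds 0) := by
      have h1 : Filter.Tendsto (fun t : ℝ => β*t) Filter.atTop Filter.atTop :=
        Filter.Tendsto.const_mul_atTop hβ Filter.tendsto_id
      have h2 : Filter.Tendsto (fun t : ℝ => -(β*t)) Filter.atTop Filter.atBot :=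
        tendsto_neg_atTop_atBot.comp h1
      have h3 : Filter.Tendsto (fun t : ℝ => Real.exp (-(β*t))) Filter.atTop (nhds 0) :=
        Real.tendsto_exp_atBot.comp h2
      have h4 := h3.mul_const (Vf x 0 + ∫ s in (0:ℝ)..T, HHf β τ σ₂ C α x s)
      simpa using h4
    have hev : ∀ᶠ t in Filter.atTop, Vf x t ≤ σ₂*(L+ε) + 4*C*ε/β + ε := by
      filter_upwards [Filter.eventually_ge_atTop T, htrans.eventually (gt_mem_nhds hε)]
        with t htT htr
      have ht0 : 0 ≤ t := le_trans hT0 htT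
      have hkey := key t ht0
      have hsplit : ∫ s in (0:ℝ)..t, HHf β τ σ₂ C α x s
          = (∫ s in (0:ℝ)..T, HHf β τ σ₂ C α x s) + ∫ s in T..t, HHf β τ σ₂ C α x s :=
        (integral_add_adjacent_intervals (hHint 0 T le_rfl hT0) (hHint T t hT0 htT)).symm
      -- tail bound
      have htail : ∫ s in T..t, HHf β τ σ₂ C α x s
          ≤ (β*σ₂*(L+ε) + 4*C*ε) * ((Real.exp (β*t) - Real.exp (β*T))/β) := by
        have hptw : ∀ s ∈ Set.Icc T t, HHf β τ σ₂ C α x s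
            ≤ (β*σ₂*(L+ε) + 4*C*ε) * Real.exp (β*s) := by
          intro s hs
          have hsT := hs.1
          have hV' : Vf x (s-τ) ≤ L + ε := (hT₁ (s-τ) (by linarith)).le
          have hα' : α s ≤ ε := (hT₂ s (by linarith)).le
          have hVpos := hV0 (s-τ)
          have hαpos' := hα0 s
          have hepos := (Real.exp_pos (β*s)).le
          unfold HHf
          have hb1 : Real.exp (β*s) * (β*σ₂* Vf x (s-τ)) ≤ Real.exp (β*s) * (β*σ₂*(L+ε)) :=
            mul_le_mul_of_nonneg_left (mul_le_mul_of_nonneg_left hV' (by positivity)) hepos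
          have hb2 : Real.exp (β*s) * (4*C*α s) ≤ Real.exp (β*s) * (4*C*ε) :=
            mul_le_mul_of_nonneg_left (mul_le_mul_of_nonneg_left hα' (by positivity)) hepos
          nlinarith
        have hint2 : IntervalIntegrable
            (fun s => (β*σ₂*(L+ε) + 4*C*ε) * Real.exp (β*s)) volume T t :=
          ((continuous_const.mul
            (Real.continuous_exp.comp (continuous_const.mul continuous_id))).continuousOn).intervalIntegrable
        calc ∫ s in T..t, HHf β τ σ₂ C α x s
            ≤ ∫ s in T..t, (β*σ₂*(L+ε) + 4*C*ε) * Real.exp (β*s) :=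
              integral_mono_on htT (hHint T t hT0 htT) hint2 hptw
          _ = (β*σ₂*(L+ε) + 4*C*ε) * ((Real.exp (β*t) - Real.exp (β*T))/β) := by
              rw [intervalIntegral.integral_const_mul, hexpint]
      -- combine
      have hepos := Real.exp_pos (β*t)
      have heneg := Real.exp_pos (-(β*t))
      have hprod : Real.exp (-(β*t)) * Real.exp (β*t) = 1 := by
        rw [← Real.exp_add]; norm_num
      have hVt : Vf x t ≤ Real.exp (-(β*t)) * (Vf x 0 + ∫ s in (0:ℝ)..t, HHf β τ σ₂ C α x s) := by
        have := mul_le_mul_of_nonneg_left hkey heneg.le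
        calc Vf x t = Real.exp (-(β*t)) * (Real.exp (β*t) * Vf x t) := by
              rw [← mul_assoc, hprod, one_mul]
          _ ≤ Real.exp (-(β*t)) * (Vf x 0 + ∫ s in (0:ℝ)..t, HHf β τ σ₂ C α x s) := this
      have hcoef : 0 ≤ β*σ₂*(L+ε) + 4*C*ε := by positivity
      have htail2 : Real.exp (-(β*t)) * ∫ s in T..t, HHf β τ σ₂ C α x s
          ≤ σ₂*(L+ε) + 4*C*ε/β := by
        have h1 : Real.exp (-(β*t)) * ∫ s in T..t, HHf β τ σ₂ C α x s
            ≤ Real.exp (-(β*t)) * ((β*σ₂*(L+ε) + 4*C*ε) * ((Real.exp (β*t) - Real.exp (β*T))/β)) :=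
          mul_le_mul_of_nonneg_left htail heneg.le
        have hexpT := Real.exp_pos (β*T)
        have h2 : Real.exp (-(β*t)) * ((β*σ₂*(L+ε) + 4*C*ε) * ((Real.exp (β*t) - Real.exp (β*T))/β))
            ≤ (β*σ₂*(L+ε) + 4*C*ε) * (1/β) := by
          have h3 : Real.exp (-(β*t)) * (Real.exp (β*t) - Real.exp (β*T)) ≤ 1 := by
            nlinarith [hprod, mul_pos heneg hexpT]
          have h4 := mul_le_mul_of_nonneg_left h3 hcoef
          have h5 := mul_le_mul_of_nonneg_right h4 (le_of_lt (one_div_pos.mpr hβ))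
          calc Real.exp (-(β*t)) * ((β*σ₂*(L+ε) + 4*C*ε) * ((Real.exp (β*t) - Real.exp (β*T))/β))
              = (β*σ₂*(L+ε) + 4*C*ε) * (Real.exp (-(β*t)) * (Real.exp (β*t) - Real.exp (β*T))) * (1/β) := by
                ring
            _ ≤ (β*σ₂*(L+ε) + 4*C*ε) * 1 * (1/β) := h5
            _ = (β*σ₂*(L+ε) + 4*C*ε) * (1/β) := by ring
        calc Real.exp (-(β*t)) * ∫ s in T..t, HHf β τ σ₂ C α x s
            ≤ (β*σ₂*(L+ε) + 4*C*ε) * (1/β) := le_trans h1 h2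
          _ = σ₂*(L+ε) + 4*C*ε/β := by field_simp
      have hsum := htr
      calc Vf x t ≤ Real.exp (-(β*t)) * (Vf x 0 + ∫ s in (0:ℝ)..t, HHf β τ σ₂ C α x s) := hVt
        _ = Real.exp (-(β*t)) * (Vf x 0 + ∫ s in (0:ℝ)..T, HHf β τ σ₂ C α x s)
            + Real.exp (-(β*t)) * ∫ s in T..t, HHf β τ σ₂ C α x s := by
            rw [hsplit]; ring
        _ ≤ ε + (σ₂*(L+ε) + 4*C*ε/β) := by
            have := htail2
            linarith [htr]
        _ = σ₂*(L+ε) + 4*C*ε/β + ε := by ring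
    exact Filter.limsup_le_of_le hbddge.isCoboundedUnder_le hev
  -- conclude L ≤ 0
  have hK : (0:ℝ) < σ₂ + 4*C/β + 1 := by positivity
  have hL1 : L * (1 - σ₂) ≤ 0 := by
    refine le_of_forall_pos_le_add ?_
    intro ε hε
    have hε' : 0 < ε / (σ₂ + 4*C/β + 1) := by positivity
    have := hmain _ hε'
    rw [zero_add]
    have hexp : σ₂*(L+ε / (σ₂ + 4*C/β + 1)) + 4*C*(ε / (σ₂ + 4*C/β + 1))/β + ε / (σ₂ + 4*C/β + 1)
        = σ₂*L + (σ₂ + 4*C/β + 1) * (ε / (σ₂ + 4*C/β + 1)) := by ring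
    rw [hexp, mul_div_cancel₀ _ (ne_of_gt hK)] at this
    nlinarith
  have hLle : L ≤ 0 := by nlinarith
  have hVlim : Filter.Tendsto (Vf x) Filter.atTop (nhds 0) := by
    refine tendsto_of_le_liminf_of_limsup_le ?_ hLle hbddle hbddge
    exact Filter.le_liminf_of_le hbddle.isCoboundedUnder_ge (Filter.Eventually.of_forall hV0)
  intro i
  refine squeeze_zero (fun t => abs_nonneg _) (fun t => ?_) hVlim
  exact abs_le_eNorm (fun j => Yf x j t) i
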